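/- For every block configuration B in 𝔽₂^d of rank r and size s, the cyclic transversal polytope CTP[B] admits an extended formulation of size at most 2^r · s: there exist a natural number N ≤ 2^r · s, finitely many linear equations given by a matrix C and vector e (i.e., the affine constraint set {y ∈ ℝ^N : Cy = e}), and a linear map π : ℝ^N → ℝ^B such that π( { y ∈ ℝ^N : y ≥ 0 and Cy = e } ) = CTP[B]; in particular the polyhedron { y ∈ ℝ^N : y ≥ 0, Cy = e } is described by at most 2^r · s linear inequalities besides equations. -/

import Mathlib

open scoped Classical

/-- The field `𝔽₂^d`, represented as functions `Fin d → ZMod 2`. -/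
abbrev F2 (d : ℕ) : Type := Fin d → ZMod 2

/-- A cyclic transversal of a block configuration `B`. -/
def IsCyclicTransversal {d n : ℕ} (B : Fin n → Set (F2 d)) (ξ : Fin n → F2 d) : Prop :=
  (∀ i, ξ i ∈ B i) ∧ (∑ i, ξ i) = 0

/-- The incidence vector of a transversal. -/
noncomputable def incVec {d n : ℕ} (ξ : Fin n → F2 d) : Fin n → F2 d → ℝ :=
  fun i ω => if ξ i = ω then 1 else 0

/-- The cyclic transversal polytope of a block configuration. -/
noncomputable def CTP {d n : ℕ} (B : Fin n → Set (F2 d)) : Set (Fin n → F2 d → ℝ) :=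
  convexHull ℝ (incVec '' { ξ | IsCyclicTransversal B ξ })

/-- The transversal polytope of a block configuration. -/
def TP {d n : ℕ} (B : Fin n → Set (F2 d)) : Set (Fin n → F2 d → ℝ) :=
  { x | (∀ i ω, 0 ≤ x i ω) ∧ (∀ i ω, ω ∉ B i → x i ω = 0) ∧ ∀ i, (∑ ω : F2 d, x i ω) = 1 }

/-- The size of a block configuration. -/
noncomputable def blockSize {d n : ℕ} (B : Fin n → Set (F2 d)) : ℕ := ∑ i, (B i).ncard

/-- The rank of a block configuration. -/
noncomputable def blockRank {d n : ℕ} (B : Fin n → Set (F2 d)) : ℕ :=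
  Module.finrank (ZMod 2) (Submodule.span (ZMod 2) (⋃ i, B i))

/-- Two sets of real vectors are affinely isomorphic. -/
def AffIso {α β : Type*} [AddCommGroup α] [Module ℝ α] [AddCommGroup β] [Module ℝ β]
    (P : Set α) (Q : Set β) : Prop :=
  ∃ f : α →ᵃ[ℝ] β, Set.InjOn f P ∧ f '' P = Q

/-- The left-hand side of the lifted odd-set (LOS) inequality associated with `η` and `I`. -/
noncomputable def losLHS {d n : ℕ} (B : Fin n → Set (F2 d)) (η : F2 d) (I : Finset (Fin n))
    (x : Fin n → F2 d → ℝ) : ℝ :=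
  (∑ i ∈ I, ∑ ω ∈ Finset.univ.filter (fun ω : F2 d => ω ∈ B i ∧ (∑ j, η j * ω j) = 0), x i ω) +
  (∑ i ∈ Iᶜ, ∑ ω ∈ Finset.univ.filter (fun ω : F2 d => ω ∈ B i ∧ (∑ j, η j * ω j) = 1), x i ω)

section EF

variable {d n : ℕ} (B : Fin n → Set (F2 d))

abbrev Wsp : Submodule (ZMod 2) (F2 d) := Submodule.span (ZMod 2) (⋃ i, B i)

lemma mem_Wsp {i : Fin n} {ω : F2 d} (h : ω ∈ B i) : ω ∈ Wsp B :=
  Submodule.subset_span (Set.mem_iUnion.2 ⟨i, h⟩)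

abbrev ArcT := (i : Fin n) × (↥(B i) × ↥(Wsp B))

abbrev NodeT := Fin (n + 1) × ↥(Wsp B)

def arcOut : ArcT B → NodeT B := fun j => (j.1.castSucc, j.2.2)

def arcIn : ArcT B → NodeT B :=
  fun j => (j.1.succ, j.2.2 + ⟨(j.2.1 : F2 d), mem_Wsp B j.2.1.2⟩)

noncomputable def outS (z : ArcT B → ℝ) (k : NodeT B) : ℝ :=
  ∑ j : ArcT B, if arcOut B j = k then z j else 0

noncomputable def inS (z : ArcT B → ℝ) (k : NodeT B) : ℝ :=
  ∑ j : ArcT B, if arcIn B j = k then z j else 0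

noncomputable def evec : NodeT B → ℝ :=
  fun k => (if k.1 = 0 ∧ k.2 = 0 then 1 else 0) -
    (if k.1 = Fin.last n ∧ k.2 = 0 then 1 else 0)

/-- The feasible set of the extended formulation. -/
def QS : Set (ArcT B → ℝ) :=
  { z | (∀ j, 0 ≤ z j) ∧ ∀ k, outS B z k - inS B z k = evec B k }

noncomputable def layerS (z : ArcT B → ℝ) (i : Fin n) : ℝ :=
  ∑ j : ArcT B, if j.1 = i then z j else 0

/-- generic helpers -/
lemma sum_pos_exists {α : Type*} [Fintype α] (f : α → ℝ) (h : 0 < ∑ a, f a) :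
    ∃ a, 0 < f a := by
  by_contra h'
  push_neg at h'
  exact absurd (Finset.sum_nonpos fun a _ => h' a) (not_le.2 h)

lemma single_le_sum_ite {α : Type*} [Fintype α] {f : α → ℝ} (hf : ∀ a, 0 ≤ f a)
    {p : α → Prop} [DecidablePred p] {a : α} (ha : p a) : f a ≤ ∑ x, if p x then f x else 0 := by
  have h := Finset.single_le_sum (f := fun x => if p x then f x else 0)
    (fun x _ => by split_ifs; exacts [hf x, le_rfl]) (Finset.mem_univ a)
  simp only [if_pos ha] at h
  exact h

lemma sum_ite_subtype {α : Type*} [Fintype α] [DecidableEq α] {P : α → Prop} [Fintype {x // P x}]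
    (a : α) (ha : P a) (g : {x // P x} → ℝ) :
    (∑ x : {x // P x}, if (x : α) = a then g x else 0) = g ⟨a, ha⟩ := by
  rw [Finset.sum_eq_single_of_mem ⟨a, ha⟩ (Finset.mem_univ _)]
  · exact if_pos rfl
  · intro b _ hb
    exact if_neg (fun h => hb (Subtype.ext h))

lemma sum_ite_subtype_zero {α : Type*} [Fintype α] [DecidableEq α] {P : α → Prop} [Fintype {x // P x}]
    (a : α) (ha : ¬ P a) (g : {x // P x} → ℝ) :
    (∑ x : {x // P x}, if (x : α) = a then g x else 0) = 0 := by
  refine Finset.sum_eq_zero fun x _ => if_neg (fun h => ha ?_)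
  rw [← h]; exact x.2

/-- structural sum lemmas -/
lemma outS_castSucc (z : ArcT B → ℝ) (i : Fin n) (γ : ↥(Wsp B)) :
    outS B z (i.castSucc, γ) = ∑ ω : ↥(B i), z ⟨i, ω, γ⟩ := by
  rw [outS, ← Finset.univ_sigma_univ, Finset.sum_sigma]
  rw [Finset.sum_eq_single_of_mem i (Finset.mem_univ i)]
  · rw [Fintype.sum_prod_type]
    refine Finset.sum_congr rfl fun ω _ => ?_
    simp [arcOut, Prod.ext_iff, Finset.sum_ite_eq']
  · intro b _ hb
    refine Finset.sum_eq_zero fun p _ => if_neg ?_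
    simp only [arcOut, Prod.mk.injEq, Fin.castSucc_inj, not_and]
    intro h
    exact absurd h hb

lemma inS_succ (z : ArcT B → ℝ) (i : Fin n) (δ : ↥(Wsp B)) :
    inS B z (i.succ, δ) = ∑ ω : ↥(B i), z ⟨i, ω, δ - ⟨(ω : F2 d), mem_Wsp B ω.2⟩⟩ := by
  rw [inS, ← Finset.univ_sigma_univ, Finset.sum_sigma]
  rw [Finset.sum_eq_single_of_mem i (Finset.mem_univ i)]
  · rw [Fintype.sum_prod_type]
    refine Finset.sum_congr rfl fun ω _ => ?_
    have key : ∀ γ : ↥(Wsp B), (γ + ⟨(ω : F2 d), mem_Wsp B ω.2⟩ = δ) ↔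
        γ = δ - ⟨(ω : F2 d), mem_Wsp B ω.2⟩ := by
      intro γ
      constructor
      · intro h; exact eq_sub_of_add_eq h
      · intro h; rw [h, sub_add_cancel]
    simp only [arcIn, Prod.mk.injEq, true_and]
    rw [Finset.sum_congr rfl (fun γ _ => by rw [if_congr (by rw [key γ]) rfl rfl])]
    simp [Finset.sum_ite_eq']
  · intro b _ hb
    refine Finset.sum_eq_zero fun p _ => if_neg ?_
    simp only [arcIn, Prod.mk.injEq, Fin.succ_inj, not_and]
    intro h
    exact absurd h hb

lemma outS_last (z : ArcT B → ℝ) (γ : ↥(Wsp B)) : outS B z (Fin.last n, γ) = 0 := by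
  refine Finset.sum_eq_zero fun j _ => if_neg ?_
  simp only [arcOut, Prod.mk.injEq, not_and]
  intro h
  exact absurd h (Fin.castSucc_lt_last j.1).ne

lemma inS_zero (z : ArcT B → ℝ) (γ : ↥(Wsp B)) : inS B z (0, γ) = 0 := by
  refine Finset.sum_eq_zero fun j _ => if_neg ?_
  simp only [arcIn, Prod.mk.injEq, not_and]
  intro h
  exact absurd h (Fin.succ_ne_zero j.1)

lemma sum_outS (z : ArcT B → ℝ) (i : Fin n) :
    ∑ γ : ↥(Wsp B), outS B z (i.castSucc, γ) = layerS B z i := by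
  rw [layerS]
  simp only [outS]
  rw [Finset.sum_comm]
  refine Finset.sum_congr rfl fun j _ => ?_
  by_cases h : j.1 = i
  · rw [if_pos h]
    have : ∀ γ : ↥(Wsp B), (arcOut B j = (i.castSucc, γ)) ↔ γ = j.2.2 := by
      intro γ
      simp only [arcOut, Prod.mk.injEq, Fin.castSucc_inj, h, true_and, eq_comm]
    rw [Finset.sum_congr rfl (fun γ _ => by rw [if_congr (this γ) rfl rfl])]
    simp [Finset.sum_ite_eq']
  · rw [if_neg h]
    refine Finset.sum_eq_zero fun γ _ => if_neg ?_
    simp only [arcOut, Prod.mk.injEq, Fin.castSucc_inj, not_and]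
    intro h'; exact absurd h' h

lemma sum_inS (z : ArcT B → ℝ) (i : Fin n) :
    ∑ γ : ↥(Wsp B), inS B z (i.succ, γ) = layerS B z i := by
  rw [layerS]
  simp only [inS]
  rw [Finset.sum_comm]
  refine Finset.sum_congr rfl fun j _ => ?_
  by_cases h : j.1 = i
  · rw [if_pos h]
    have : ∀ γ : ↥(Wsp B), (arcIn B j = (i.succ, γ)) ↔
        γ = j.2.2 + ⟨(j.2.1 : F2 d), mem_Wsp B j.2.1.2⟩ := by
      intro γ
      simp only [arcIn, Prod.mk.injEq, Fin.succ_inj, h, true_and, eq_comm]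
    rw [Finset.sum_congr rfl (fun γ _ => by rw [if_congr (this γ) rfl rfl])]
    simp [Finset.sum_ite_eq']
  · rw [if_neg h]
    refine Finset.sum_eq_zero fun γ _ => if_neg ?_
    simp only [arcIn, Prod.mk.injEq, Fin.succ_inj, not_and]
    intro h'; exact absurd h' h

lemma sum_evec (k : Fin (n + 1)) :
    ∑ γ : ↥(Wsp B), evec B (k, γ) =
      (if k = 0 then 1 else 0) - (if k = Fin.last n then 1 else 0) := by
  simp only [evec]
  rw [Finset.sum_sub_distrib]
  congr 1
  · by_cases h : k = 0
    · simp [h, Finset.sum_ite_eq']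
    · simp [h]
  · by_cases h : k = Fin.last n
    · simp [h, Finset.sum_ite_eq']
    · simp [h]

lemma layerS_eq_one {z : ArcT B → ℝ} (hz : z ∈ QS B) (i : Fin n) :
    layerS B z i = 1 := by
  obtain ⟨i, hi⟩ := i
  induction i with
  | zero =>
    have h := fun γ => hz.2 ((⟨0, hi⟩ : Fin n).castSucc, γ)
    have hsum : layerS B z ⟨0, hi⟩ - ∑ γ : ↥(Wsp B), inS B z ((⟨0, hi⟩ : Fin n).castSucc, γ)
        = ∑ γ : ↥(Wsp B), evec B ((⟨0, hi⟩ : Fin n).castSucc, γ) := by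
      rw [← sum_outS, ← Finset.sum_sub_distrib]
      exact Finset.sum_congr rfl fun γ _ => h γ
    have hc0 : (⟨0, hi⟩ : Fin n).castSucc = 0 := rfl
    rw [hc0, sum_evec] at hsum
    have hin : ∑ γ : ↥(Wsp B), inS B z ((0 : Fin (n+1)), γ) = 0 :=
      Finset.sum_eq_zero fun γ _ => inS_zero B z γ
    rw [hin] at hsum
    have hlast : (0 : Fin (n+1)) ≠ Fin.last n := by
      intro h0
      have := congrArg Fin.val h0
      simp at this
      omega
    simpa [hlast] using hsum
  | succ m ih =>
    have hm : m < n := by omega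
    have hrec : layerS B z ⟨m, hm⟩ = 1 := ih hm
    have h := fun γ => hz.2 ((⟨m + 1, hi⟩ : Fin n).castSucc, γ)
    have hsum : layerS B z ⟨m + 1, hi⟩ - ∑ γ : ↥(Wsp B), inS B z ((⟨m + 1, hi⟩ : Fin n).castSucc, γ)
        = ∑ γ : ↥(Wsp B), evec B ((⟨m + 1, hi⟩ : Fin n).castSucc, γ) := by
      rw [← sum_outS, ← Finset.sum_sub_distrib]
      exact Finset.sum_congr rfl fun γ _ => h γ
    have hcs : (⟨m + 1, hi⟩ : Fin n).castSucc = (⟨m, hm⟩ : Fin n).succ := by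
      apply Fin.ext; simp
    rw [hcs, sum_inS, hrec, sum_evec] at hsum
    have h0 : (⟨m, hm⟩ : Fin n).succ ≠ 0 := Fin.succ_ne_zero _
    have hl : (⟨m, hm⟩ : Fin n).succ ≠ Fin.last n := by
      intro h0'
      have := congrArg Fin.val h0'
      simp at this
      omega
    simp only [h0, hl, if_false] at hsum
    linarith

/-- partial sums of a transversal -/
def preSum {d n : ℕ} (ξ : Fin n → F2 d) (k : ℕ) : F2 d :=
  ∑ j ∈ Finset.univ.filter (fun j : Fin n => (j : ℕ) < k), ξ j

lemma preSum_zero {d n : ℕ} (ξ : Fin n → F2 d) : preSum ξ 0 = 0 := by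
  simp [preSum]

lemma preSum_succ {d n : ℕ} (ξ : Fin n → F2 d) {k : ℕ} (hk : k < n) :
    preSum ξ (k + 1) = preSum ξ k + ξ ⟨k, hk⟩ := by
  rw [preSum, preSum]
  have hset : Finset.univ.filter (fun j : Fin n => (j : ℕ) < k + 1) =
      insert ⟨k, hk⟩ (Finset.univ.filter (fun j : Fin n => (j : ℕ) < k)) := by
    ext j
    simp only [Finset.mem_filter, Finset.mem_univ, true_and, Finset.mem_insert]
    constructor
    · intro h
      rcases Nat.lt_succ_iff_lt_or_eq.mp h with h' | h'
      · exact Or.inr h'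
      · exact Or.inl (Fin.ext h')
    · rintro (h | h)
      · rw [h]; simp
      · omega
  rw [hset, Finset.sum_insert (by simp)]
  ring

lemma preSum_top {d n : ℕ} (ξ : Fin n → F2 d) : preSum ξ n = ∑ j, ξ j := by
  rw [preSum]
  congr 1
  ext j
  simp [j.isLt]

lemma preSum_congr {d n : ℕ} {ξ ξ' : Fin n → F2 d} {k : ℕ}
    (h : ∀ j : Fin n, (j : ℕ) < k → ξ j = ξ' j) : preSum ξ k = preSum ξ' k :=
  Finset.sum_congr rfl fun j hj => h j (Finset.mem_filter.mp hj).2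

lemma preSum_mem {ξ : Fin n → F2 d} (hξ : ∀ i, ξ i ∈ B i) (k : ℕ) :
    preSum ξ k ∈ Wsp B :=
  Submodule.sum_mem _ fun j _ => mem_Wsp B (hξ j)

/-- the arc along the canonical path of a transversal -/
def mkArc (ξ : Fin n → F2 d) (hξ : ∀ i, ξ i ∈ B i) (i : Fin n) : ArcT B :=
  ⟨i, ⟨ξ i, hξ i⟩, ⟨preSum ξ (i : ℕ), preSum_mem B hξ (i : ℕ)⟩⟩

lemma mkArc_congr {ξ ξ' : Fin n → F2 d} (hξ : ∀ i, ξ i ∈ B i) (hξ' : ∀ i, ξ' i ∈ B i)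
    (i : Fin n) (h1 : ξ i = ξ' i) (h2 : preSum ξ (i : ℕ) = preSum ξ' (i : ℕ)) :
    mkArc B ξ hξ i = mkArc B ξ' hξ' i := by
  rw [mkArc, mkArc]
  congr 1
  exact Prod.ext (Subtype.ext h1) (Subtype.ext h2)

lemma arcOut_mkArc {ξ : Fin n → F2 d} (hξ : ∀ i, ξ i ∈ B i) (i : Fin n) :
    arcOut B (mkArc B ξ hξ i) = (i.castSucc, ⟨preSum ξ (i : ℕ), preSum_mem B hξ _⟩) := rfl

lemma arcIn_mkArc {ξ : Fin n → F2 d} (hξ : ∀ i, ξ i ∈ B i) (i : Fin n) :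
    arcIn B (mkArc B ξ hξ i) =
      (i.succ, ⟨preSum ξ ((i : ℕ) + 1), preSum_mem B hξ _⟩) := by
  rw [arcIn, mkArc]
  refine Prod.ext rfl (Subtype.ext ?_)
  simp only [Submodule.coe_add]
  rw [preSum_succ ξ i.isLt]

/-- the unit flow along the canonical path of a transversal -/
noncomputable def pathFlow (ξ : Fin n → F2 d) : ArcT B → ℝ :=
  fun j => if ((j.2.1 : F2 d) = ξ j.1 ∧ (j.2.2 : F2 d) = preSum ξ (j.1 : ℕ)) then 1 else 0

lemma pathFlow_nonneg (ξ : Fin n → F2 d) (j : ArcT B) : 0 ≤ pathFlow B ξ j := by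
  rw [pathFlow]; split_ifs <;> norm_num

lemma pathFlow_mkArc {ξ : Fin n → F2 d} (hξ : ∀ i, ξ i ∈ B i) (i : Fin n) :
    pathFlow B ξ (mkArc B ξ hξ i) = 1 := if_pos ⟨rfl, rfl⟩

lemma pathFlow_eq_zero {ξ : Fin n → F2 d} (hξ : ∀ i, ξ i ∈ B i) {j : ArcT B}
    (h : j ≠ mkArc B ξ hξ j.1) : pathFlow B ξ j = 0 := by
  rw [pathFlow]
  refine if_neg fun hc => h ?_
  obtain ⟨i, ω, γ⟩ := j
  simp only [mkArc]
  congr 1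
  exact Prod.ext (Subtype.ext hc.1) (Subtype.ext hc.2)

lemma outS_pathFlow {ξ : Fin n → F2 d} (hξ : ∀ i, ξ i ∈ B i) (i : Fin n) (γ : ↥(Wsp B)) :
    outS B (pathFlow B ξ) (i.castSucc, γ) =
      if (γ : F2 d) = preSum ξ (i : ℕ) then 1 else 0 := by
  rw [outS_castSucc]
  have h : ∀ ω : ↥(B i), pathFlow B ξ ⟨i, ω, γ⟩ =
      if (ω : F2 d) = ξ i then (if (γ : F2 d) = preSum ξ (i : ℕ) then 1 else 0) else 0 := by
    intro ω
    rw [pathFlow]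
    by_cases h1 : (ω : F2 d) = ξ i <;> by_cases h2 : (γ : F2 d) = preSum ξ (i : ℕ) <;>
      simp [h1, h2]
  rw [Finset.sum_congr rfl fun ω _ => h ω, sum_ite_subtype (ξ i) (hξ i)]

lemma inS_pathFlow {ξ : Fin n → F2 d} (hξ : ∀ i, ξ i ∈ B i) (i : Fin n) (δ : ↥(Wsp B)) :
    inS B (pathFlow B ξ) (i.succ, δ) =
      if (δ : F2 d) = preSum ξ (i : ℕ) + ξ i then 1 else 0 := by
  rw [inS_succ]
  have h : ∀ ω : ↥(B i), pathFlow B ξ ⟨i, ω, δ - ⟨(ω : F2 d), mem_Wsp B ω.2⟩⟩ =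
      if (ω : F2 d) = ξ i then
        (if (δ : F2 d) - (ω : F2 d) = preSum ξ (i : ℕ) then 1 else 0) else 0 := by
    intro ω
    rw [pathFlow]
    have hco : ((δ - ⟨(ω : F2 d), mem_Wsp B ω.2⟩ : ↥(Wsp B)) : F2 d)
        = (δ : F2 d) - (ω : F2 d) := rfl
    by_cases h1 : (ω : F2 d) = ξ i <;>
      by_cases h2 : (δ : F2 d) - (ω : F2 d) = preSum ξ (i : ℕ) <;>
      simp [h1, h2, hco]
  rw [Finset.sum_congr rfl fun ω _ => h ω, sum_ite_subtype (ξ i) (hξ i)]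
  congr 1
  simp only [eq_iff_iff]
  constructor
  · intro h'; rw [← h']; abel
  · intro h'; rw [h']; abel

lemma pathFlow_mem_QS (hn : 0 < n) {ξ : Fin n → F2 d} (hξ : IsCyclicTransversal B ξ) :
    pathFlow B ξ ∈ QS B := by
  refine ⟨pathFlow_nonneg B ξ, ?_⟩
  rintro ⟨a, γ⟩
  induction a using Fin.lastCases with
  | last =>
    have hiL : n - 1 < n := by omega
    have hlast : Fin.last n = (⟨n - 1, hiL⟩ : Fin n).succ := by
      apply Fin.ext; simp; omega
    rw [outS_last, hlast, inS_pathFlow B hξ.1]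
    have hps : preSum ξ ((⟨n - 1, hiL⟩ : Fin n) : ℕ) + ξ ⟨n - 1, hiL⟩ = 0 := by
      have h1 : ((⟨n - 1, hiL⟩ : Fin n) : ℕ) + 1 = n := by simp; omega
      rw [← preSum_succ ξ hiL, h1, preSum_top, hξ.2]
    rw [hps, evec]
    have h0 : ¬ ((⟨n - 1, hiL⟩ : Fin n).succ = 0 ∧ γ = 0) := by
      rintro ⟨h, -⟩; exact Fin.succ_ne_zero _ h
    rw [if_neg h0, ← hlast]
    simp only [true_and, if_pos rfl]
    have : ((γ : F2 d) = 0) ↔ γ = 0 := by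
      constructor
      · intro h; exact Subtype.ext h
      · intro h; rw [h]; rfl
    by_cases hγ : γ = 0
    · rw [if_pos (this.mpr hγ), if_pos hγ]
    · rw [if_neg (fun hc => hγ (this.mp hc)), if_neg hγ]
  | cast i =>
    haveI : NeZero n := ⟨by omega⟩
    by_cases hi : i = 0
    · subst hi
      have hc0 : (0 : Fin n).castSucc = 0 := rfl
      rw [outS_pathFlow B hξ.1, hc0, inS_zero, evec]
      have hps : preSum ξ ((0 : Fin n) : ℕ) = 0 := preSum_zero ξ
      rw [hps]
      have hlast : ¬ ((0 : Fin (n + 1)) = Fin.last n ∧ γ = 0) := by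
        rintro ⟨h, -⟩
        have := congrArg Fin.val h
        simp at this
        omega
      rw [if_neg hlast]
      simp only [true_and, if_pos rfl]
      have : ((γ : F2 d) = 0) ↔ γ = 0 := by
        constructor
        · intro h; exact Subtype.ext h
        · intro h; rw [h]; rfl
      by_cases hγ : γ = 0
      · rw [if_pos (this.mpr hγ), if_pos hγ]
      · rw [if_neg (fun hc => hγ (this.mp hc)), if_neg hγ]
    · have hne : (i : ℕ) ≠ 0 := fun hc => hi (Fin.ext hc)
      have hvp : (i : ℕ) - 1 < n := by omega
      have hcs : i.castSucc = (⟨(i : ℕ) - 1, hvp⟩ : Fin n).succ := by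
        apply Fin.ext
        simp only [Fin.coe_castSucc, Fin.val_succ]
        omega
      have hpre : preSum ξ (((⟨(i : ℕ) - 1, hvp⟩ : Fin n)) : ℕ) + ξ ⟨(i : ℕ) - 1, hvp⟩
          = preSum ξ (i : ℕ) := by
        have h1 : ((i : ℕ) - 1) + 1 = (i : ℕ) := by omega
        show preSum ξ ((i : ℕ) - 1) + ξ ⟨(i : ℕ) - 1, hvp⟩ = preSum ξ (i : ℕ)
        rw [← preSum_succ ξ hvp, h1]
      rw [outS_pathFlow B hξ.1]
      rw [hcs, inS_pathFlow B hξ.1, hpre, ← hcs, evec]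
      have h1 : ¬ (i.castSucc = 0 ∧ γ = 0) := by
        rintro ⟨h, -⟩
        exact hi (by simpa using h)
      have h2 : ¬ (i.castSucc = Fin.last n ∧ γ = 0) := by
        rintro ⟨h, -⟩
        exact (Fin.castSucc_lt_last i).ne h
      rw [if_neg h1, if_neg h2]
      ring

/-- linearity of `outS` and `inS` -/
lemma outS_add (z1 z2 : ArcT B → ℝ) (k : NodeT B) :
    outS B (z1 + z2) k = outS B z1 k + outS B z2 k := by
  rw [outS, outS, outS, ← Finset.sum_add_distrib]
  exact Finset.sum_congr rfl fun j _ => by by_cases h : arcOut B j = k <;> simp [h]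

lemma outS_smul (c : ℝ) (z : ArcT B → ℝ) (k : NodeT B) :
    outS B (c • z) k = c * outS B z k := by
  rw [outS, outS, Finset.mul_sum]
  exact Finset.sum_congr rfl fun j _ => by by_cases h : arcOut B j = k <;> simp [h]

lemma outS_sub (z1 z2 : ArcT B → ℝ) (k : NodeT B) :
    outS B (z1 - z2) k = outS B z1 k - outS B z2 k := by
  rw [outS, outS, outS, ← Finset.sum_sub_distrib]
  exact Finset.sum_congr rfl fun j _ => by by_cases h : arcOut B j = k <;> simp [h]

lemma inS_add (z1 z2 : ArcT B → ℝ) (k : NodeT B) :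
    inS B (z1 + z2) k = inS B z1 k + inS B z2 k := by
  rw [inS, inS, inS, ← Finset.sum_add_distrib]
  exact Finset.sum_congr rfl fun j _ => by by_cases h : arcIn B j = k <;> simp [h]

lemma inS_smul (c : ℝ) (z : ArcT B → ℝ) (k : NodeT B) :
    inS B (c • z) k = c * inS B z k := by
  rw [inS, inS, Finset.mul_sum]
  exact Finset.sum_congr rfl fun j _ => by by_cases h : arcIn B j = k <;> simp [h]

lemma inS_sub (z1 z2 : ArcT B → ℝ) (k : NodeT B) :
    inS B (z1 - z2) k = inS B z1 k - inS B z2 k := by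
  rw [inS, inS, inS, ← Finset.sum_sub_distrib]
  exact Finset.sum_congr rfl fun j _ => by by_cases h : arcIn B j = k <;> simp [h]

/-- the projection -/
noncomputable def projL : (ArcT B → ℝ) →ₗ[ℝ] (Fin n → F2 d → ℝ) where
  toFun z := fun i ω => ∑ j : ArcT B, if (j.1 = i ∧ (j.2.1 : F2 d) = ω) then z j else 0
  map_add' z1 z2 := by
    funext i ω
    simp only [Pi.add_apply]
    rw [← Finset.sum_add_distrib]
    exact Finset.sum_congr rfl fun j _ => by
      by_cases h : (j.1 = i ∧ (j.2.1 : F2 d) = ω) <;> simp [h]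
  map_smul' c z := by
    funext i ω
    simp only [Pi.smul_apply, smul_eq_mul, RingHom.id_apply]
    rw [Finset.mul_sum]
    exact Finset.sum_congr rfl fun j _ => by
      by_cases h : (j.1 = i ∧ (j.2.1 : F2 d) = ω) <;> simp [h]

lemma projL_apply_eq (z : ArcT B → ℝ) (i : Fin n) (ω : F2 d) :
    projL B z i ω = ∑ p : ↥(B i) × ↥(Wsp B),
      if ((p.1 : F2 d) = ω) then z ⟨i, p⟩ else 0 := by
  show (∑ j : ArcT B, if (j.1 = i ∧ (j.2.1 : F2 d) = ω) then z j else 0) = _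
  rw [← Finset.univ_sigma_univ, Finset.sum_sigma]
  rw [Finset.sum_eq_single_of_mem i (Finset.mem_univ i)]
  · exact Finset.sum_congr rfl fun p _ => by simp
  · intro b _ hb
    exact Finset.sum_eq_zero fun p _ => if_neg (fun h => hb h.1)

lemma projL_pathFlow {ξ : Fin n → F2 d} (hξ : ∀ i, ξ i ∈ B i) :
    projL B (pathFlow B ξ) = incVec ξ := by
  funext i ω
  rw [projL_apply_eq, Fintype.sum_prod_type, incVec]
  have h : ∀ (ω' : ↥(B i)) (γ : ↥(Wsp B)),
      (if ((ω' : F2 d) = ω) then pathFlow B ξ ⟨i, ω', γ⟩ else 0) =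
      if ((ω' : F2 d) = ω ∧ (ω' : F2 d) = ξ i ∧ (γ : F2 d) = preSum ξ (i : ℕ)) then 1 else 0 := by
    intro ω' γ
    rw [pathFlow]
    by_cases h1 : (ω' : F2 d) = ω <;> by_cases h2 : (ω' : F2 d) = ξ i <;>
      by_cases h3 : (γ : F2 d) = preSum ξ (i : ℕ) <;> simp [h1, h2, h3]
  simp only [Finset.sum_congr rfl fun ω' _ => Finset.sum_congr rfl fun γ _ => h ω' γ]
  by_cases hω : ξ i = ω
  · subst hω
    rw [if_pos rfl]
    have h2 : ∀ (ω' : ↥(B i)) (γ : ↥(Wsp B)),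
        (if ((ω' : F2 d) = ξ i ∧ (ω' : F2 d) = ξ i ∧ (γ : F2 d) = preSum ξ (i : ℕ)) then (1:ℝ) else 0) =
        if ((ω' : F2 d) = ξ i) then (if ((γ : F2 d) = preSum ξ (i : ℕ)) then 1 else 0) else 0 := by
      intro ω' γ
      rw [← ite_and]
      exact if_congr (by constructor; · rintro ⟨h1, -, h3⟩; exact ⟨h1, h3⟩
                         · rintro ⟨h1, h3⟩; exact ⟨h1, h1, h3⟩) rfl rfl
    rw [Finset.sum_congr rfl fun ω' _ => Finset.sum_congr rfl fun γ _ => h2 ω' γ]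
    have h3 : ∀ ω' : ↥(B i), (∑ γ : ↥(Wsp B),
        if ((ω' : F2 d) = ξ i) then (if ((γ : F2 d) = preSum ξ (i : ℕ)) then (1:ℝ) else 0) else 0) =
        if ((ω' : F2 d) = ξ i) then 1 else 0 := by
      intro ω'
      by_cases hh : (ω' : F2 d) = ξ i
      · simp only [if_pos hh]
        exact sum_ite_subtype (preSum ξ (i : ℕ)) (preSum_mem B hξ _) (fun _ => (1:ℝ))
      · simp [hh]
    rw [Finset.sum_congr rfl fun ω' _ => h3 ω']
    exact sum_ite_subtype (ξ i) (hξ i) (fun _ => (1:ℝ))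
  · rw [if_neg hω]
    refine Finset.sum_eq_zero fun ω' _ => Finset.sum_eq_zero fun γ _ => if_neg ?_
    rintro ⟨h1, h2, -⟩
    exact hω (h2.symm.trans h1)

lemma exists_pos_arcOut {z : ArcT B → ℝ} (k : NodeT B) (h : 0 < outS B z k) :
    ∃ j : ArcT B, arcOut B j = k ∧ 0 < z j := by
  obtain ⟨j, hj⟩ := sum_pos_exists _ h
  by_cases hc : arcOut B j = k
  · exact ⟨j, hc, by rwa [if_pos hc] at hj⟩
  · rw [if_neg hc] at hj; exact absurd hj (lt_irrefl 0)

lemma le_inS {z : ArcT B → ℝ} (hz : ∀ j, 0 ≤ z j) {j₀ : ArcT B} {k : NodeT B}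
    (h : arcIn B j₀ = k) : z j₀ ≤ inS B z k := by
  rw [inS]
  exact single_le_sum_ite hz h

lemma exists_partial_path (hB : ∀ i, (B i).Nonempty) {z : ArcT B → ℝ} (hz : z ∈ QS B) :
    ∀ k : ℕ, k ≤ n → ∃ (ξ : Fin n → F2 d) (hξ : ∀ i, ξ i ∈ B i),
      ∀ i : Fin n, (i : ℕ) < k → 0 < z (mkArc B ξ hξ i) := by
  intro k
  induction k with
  | zero => exact fun _ => ⟨fun i => (hB i).choose, fun i => (hB i).choose_spec,
      fun i hi => absurd hi (by omega)⟩
  | succ k ih =>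
    intro hk1
    obtain ⟨ξ, hξ, hpos⟩ := ih (by omega)
    have hk : k < n := by omega
    set iK : Fin n := ⟨k, hk⟩ with hiK
    set γ : ↥(Wsp B) := ⟨preSum ξ k, preSum_mem B hξ k⟩ with hγ
    have hout : 0 < outS B z (iK.castSucc, γ) := by
      have heq := hz.2 (iK.castSucc, γ)
      rcases Nat.eq_zero_or_pos k with hk0 | hk0
      · subst hk0
        have hc0 : iK.castSucc = 0 := by apply Fin.ext; simp [hiK]
        have hin : inS B z (iK.castSucc, γ) = 0 := by rw [hc0]; exact inS_zero B z γ
        have hγ0 : γ = 0 := by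
          apply Subtype.ext
          show preSum ξ 0 = 0
          exact preSum_zero ξ
        have hL : (0 : Fin (n+1)) ≠ Fin.last n := by
          intro hc
          have := congrArg Fin.val hc
          simp at this
          omega
        rw [hin, evec] at heq
        rw [hc0, hγ0] at heq ⊢
        rw [if_pos ⟨rfl, rfl⟩, if_neg (fun hc => hL hc.1)] at heq
        linarith
      · -- k = m + 1 for some m
        obtain ⟨m, rfl⟩ : ∃ m, k = m + 1 := ⟨k - 1, by omega⟩
        have hm : m < n := by omega
        set iM : Fin n := ⟨m, hm⟩ with hiM
        have hprev : 0 < z (mkArc B ξ hξ iM) := hpos iM (by simp [hiM])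
        have harc : arcIn B (mkArc B ξ hξ iM) = (iK.castSucc, γ) := by
          rw [arcIn_mkArc]
          refine Prod.ext ?_ (Subtype.ext rfl)
          apply Fin.ext
          simp [hiM, hiK]
        have hin : 0 < inS B z (iK.castSucc, γ) :=
          lt_of_lt_of_le hprev (le_inS B hz.1 harc)
        have hev : evec B (iK.castSucc, γ) = 0 := by
          rw [evec]
          have h1 : ¬ (iK.castSucc = 0 ∧ γ = 0) := by
            rintro ⟨hc, -⟩
            have := congrArg Fin.val hc
            simp [hiK] at this
          have h2 : ¬ (iK.castSucc = Fin.last n ∧ γ = 0) := by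
            rintro ⟨hc, -⟩
            exact (Fin.castSucc_lt_last iK).ne hc
          rw [if_neg h1, if_neg h2]
          ring
        rw [hev] at heq
        linarith
    obtain ⟨j, hjout, hjpos⟩ := exists_pos_arcOut B _ hout
    obtain ⟨i', p⟩ := j
    obtain ⟨hi', hp2⟩ : i' = iK ∧ p.2 = γ := by
      rw [arcOut] at hjout
      obtain ⟨h1, h2⟩ := Prod.mk.injEq .. ▸ hjout
      exact ⟨Fin.castSucc_inj.mp h1, h2⟩
    subst hi'
    obtain ⟨ω, γ'⟩ := p
    simp only at hp2
    subst hp2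
    set ξ' : Fin n → F2 d := Function.update ξ iK (ω : F2 d) with hξ'def
    have hξ' : ∀ i, ξ' i ∈ B i := by
      intro i
      by_cases hii : i = iK
      · subst hii; rw [hξ'def, Function.update_self]; exact ω.2
      · rw [hξ'def, Function.update_of_ne hii]; exact hξ i
    refine ⟨ξ', hξ', ?_⟩
    have hpre : ∀ l : ℕ, l ≤ k → preSum ξ' l = preSum ξ l := by
      intro l hl
      refine preSum_congr fun j hj => ?_
      rw [hξ'def, Function.update_of_ne]
      intro hc
      rw [hc] at hj
      have : (iK : ℕ) = k := by simp [hiK]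
      omega
    intro i hik
    by_cases hii : i = iK
    · subst hii
      have harc : mkArc B ξ' hξ' iK = ⟨iK, ω, γ⟩ := by
        rw [mkArc]
        congr 1
        refine Prod.ext (Subtype.ext ?_) (Subtype.ext ?_)
        · show ξ' iK = (ω : F2 d)
          rw [hξ'def, Function.update_self]
        · show preSum ξ' (iK : ℕ) = (γ : F2 d)
          rw [hpre (iK : ℕ) (by simp [hiK])]
      rw [harc]
      exact hjpos
    · have hik' : (i : ℕ) < k := by
        have : (i : ℕ) ≠ k := fun hc => hii (Fin.ext (by simp [hiK, hc]))
        omega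
      have harc : mkArc B ξ' hξ' i = mkArc B ξ hξ i := by
        refine mkArc_congr B hξ' hξ i ?_ (hpre (i : ℕ) (by omega))
        rw [hξ'def, Function.update_of_ne hii]
      rw [harc]
      exact hpos i hik'

lemma exists_path (hn : 0 < n) (hB : ∀ i, (B i).Nonempty) {z : ArcT B → ℝ}
    (hz : z ∈ QS B) :
    ∃ (ξ : Fin n → F2 d) (hξ : ∀ i, ξ i ∈ B i),
      IsCyclicTransversal B ξ ∧ ∀ i, 0 < z (mkArc B ξ hξ i) := by
  obtain ⟨ξ, hξ, hpos⟩ := exists_partial_path B hB hz n le_rfl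
  have hall : ∀ i, 0 < z (mkArc B ξ hξ i) := fun i => hpos i i.isLt
  have hnL : n - 1 < n := by omega
  set iL : Fin n := ⟨n - 1, hnL⟩ with hiL
  set δ : ↥(Wsp B) := ⟨preSum ξ n, preSum_mem B hξ n⟩ with hδ
  have harc : arcIn B (mkArc B ξ hξ iL) = (Fin.last n, δ) := by
    rw [arcIn_mkArc]
    refine Prod.ext ?_ (Subtype.ext ?_)
    · apply Fin.ext; simp [hiL]; omega
    · show preSum ξ ((iL : ℕ) + 1) = preSum ξ n
      have : (iL : ℕ) + 1 = n := by simp [hiL]; omega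
      rw [this]
  have hin : 0 < inS B z (Fin.last n, δ) :=
    lt_of_lt_of_le (hall iL) (le_inS B hz.1 harc)
  have heq := hz.2 (Fin.last n, δ)
  rw [outS_last, evec] at heq
  have h0 : ¬ (Fin.last n = 0 ∧ δ = 0) := by
    rintro ⟨hc, -⟩
    have := congrArg Fin.val hc
    simp at this
    omega
  rw [if_neg h0] at heq
  simp only [true_and, if_pos rfl] at heq
  have hδ0 : δ = 0 := by
    by_contra hc
    rw [if_neg hc] at heq
    linarith
  have hcyc : (∑ i, ξ i) = 0 := by
    have := congrArg Subtype.val hδ0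
    rw [← preSum_top ξ]
    exact this
  exact ⟨ξ, hξ, ⟨hξ, hcyc⟩, hall⟩

lemma pair_le_sum_ite {α : Type*} [Fintype α] {f : α → ℝ} (hf : ∀ a, 0 ≤ f a)
    {p : α → Prop} [DecidablePred p] {a b : α} (hab : a ≠ b) (ha : p a) (hb : p b) :
    f a + f b ≤ ∑ x, if p x then f x else 0 := by
  have hsub : ∑ x ∈ ({a, b} : Finset α), (if p x then f x else 0) ≤
      ∑ x, if p x then f x else 0 := by
    refine Finset.sum_le_sum_of_subset_of_nonneg (Finset.subset_univ _) fun x _ _ => ?_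
    split_ifs
    exacts [hf x, le_rfl]
  rwa [Finset.sum_pair hab, if_pos ha, if_pos hb] at hsub

lemma mem_CTP_of_QS (hn : 2 ≤ n) (hB : ∀ i, (B i).Nonempty) :
    ∀ z ∈ QS B, projL B z ∈ CTP B := by
  suffices H : ∀ m : ℕ, ∀ z, z ∈ QS B →
      (Finset.univ.filter fun j => 0 < z j).card = m → projL B z ∈ CTP B by
    exact fun z hz => H _ z hz rfl
  intro m
  induction m using Nat.strong_induction_on with
  | _ m IH =>
    intro z hz hcard
    obtain ⟨ξ, hξ, hcyc, hpos⟩ := exists_path B (by omega) hB hz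
    set p := pathFlow B ξ with hp
    have hpQS : p ∈ QS B := pathFlow_mem_QS B (by omega) hcyc
    have hne : (Finset.univ : Finset (Fin n)).Nonempty := ⟨⟨0, by omega⟩, Finset.mem_univ _⟩
    set t := Finset.univ.inf' hne (fun i => z (mkArc B ξ hξ i)) with ht
    have ht_le : ∀ i, t ≤ z (mkArc B ξ hξ i) := fun i => Finset.inf'_le _ (Finset.mem_univ i)
    have ht_pos : 0 < t := by
      rw [ht, Finset.lt_inf'_iff]
      exact fun i _ => hpos i
    have hz_le_one : ∀ j : ArcT B, z j ≤ 1 := by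
      intro j
      have h1 : layerS B z j.1 = 1 := layerS_eq_one B hz j.1
      have h2 : z j ≤ layerS B z j.1 := by
        rw [layerS]
        exact single_le_sum_ite hz.1 rfl
      linarith
    have hincVec : incVec ξ ∈ CTP B := by
      simp only [CTP]
      exact subset_convexHull ℝ _ ⟨ξ, hcyc, rfl⟩
    have ht1 : t ≤ 1 := le_trans (ht_le ⟨0, by omega⟩) (hz_le_one _)
    rcases eq_or_lt_of_le ht1 with h1 | h1
    · -- t = 1, so z is itself a path flow
      have hzp : z = p := by
        funext j
        by_cases hj : j = mkArc B ξ hξ j.1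
        · have hle := hz_le_one j
          have hge : (1 : ℝ) ≤ z j := by
            rw [hj, ← h1]
            exact ht_le j.1
          have hp1 : p j = 1 := by
            rw [hj, hp]
            exact pathFlow_mkArc B hξ j.1
          rw [hp1]
          linarith
        · have hp0 : p j = 0 := pathFlow_eq_zero B hξ hj
          rw [hp0]
          have hlay : layerS B z j.1 = 1 := layerS_eq_one B hz j.1
          have hsum : z j + z (mkArc B ξ hξ j.1) ≤ layerS B z j.1 := by
            rw [layerS]
            exact pair_le_sum_ite hz.1 hj rfl rfl
          have hge : (1 : ℝ) ≤ z (mkArc B ξ hξ j.1) := h1 ▸ ht_le j.1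
          have := hz.1 j
          linarith
      rw [hzp, hp, projL_pathFlow B hξ]
      exact hincVec
    · -- t < 1 : peel off the path flow and recurse
      set z' : ArcT B → ℝ := (1 - t)⁻¹ • (z - t • p) with hz'def
      have h1t : (0 : ℝ) < 1 - t := by linarith
      have hp01 : ∀ j, t * p j ≤ z j := by
        intro j
        by_cases hj : p j = 0
        · rw [hj, mul_zero]; exact hz.1 j
        · have hjeq : j = mkArc B ξ hξ j.1 := by
            by_contra hc
            exact hj (pathFlow_eq_zero B hξ hc)
          have hp1 : p j = 1 := by rw [hjeq, hp]; exact pathFlow_mkArc B hξ j.1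
          rw [hp1, mul_one]
          exact hjeq ▸ ht_le j.1
      have hz'nonneg : ∀ j, 0 ≤ z' j := by
        intro j
        rw [hz'def]
        simp only [Pi.smul_apply, Pi.sub_apply, smul_eq_mul]
        have := hp01 j
        have hinv : (0:ℝ) ≤ (1 - t)⁻¹ := inv_nonneg.mpr h1t.le
        nlinarith
      have hz'QS : z' ∈ QS B := by
        refine ⟨hz'nonneg, fun k => ?_⟩
        rw [hz'def, outS_smul, inS_smul, outS_sub, inS_sub, outS_smul, inS_smul]
        have e1 := hz.2 k
        have e2 := hpQS.2 k
        calc (1 - t)⁻¹ * (outS B z k - t * outS B p k) -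
              (1 - t)⁻¹ * (inS B z k - t * inS B p k)
            = (1 - t)⁻¹ * ((outS B z k - inS B z k) - t * (outS B p k - inS B p k)) := by
              ring
          _ = (1 - t)⁻¹ * ((1 - t) * evec B k) := by rw [e1, e2]; ring
          _ = evec B k := by rw [← mul_assoc, inv_mul_cancel₀ h1t.ne', one_mul]
      have hsubset : Finset.univ.filter (fun j => 0 < z' j) ⊆
          Finset.univ.filter (fun j => 0 < z j) := by
        intro j hj
        simp only [Finset.mem_filter, Finset.mem_univ, true_and] at hj ⊢
        by_contra hc
        have hz0 : z j = 0 := le_antisymm (not_lt.mp hc) (hz.1 j)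
        have hple : (0:ℝ) ≤ p j := hpQS.1 j
        have : z' j ≤ 0 := by
          rw [hz'def]
          simp only [Pi.smul_apply, Pi.sub_apply, smul_eq_mul, hz0]
          have hinv : (0:ℝ) ≤ (1 - t)⁻¹ := inv_nonneg.mpr h1t.le
          nlinarith [mul_nonneg hinv (mul_nonneg ht_pos.le hple)]
        linarith
      obtain ⟨i₀, -, hi₀⟩ := Finset.exists_mem_eq_inf' hne (fun i => z (mkArc B ξ hξ i))
      have hz'i₀ : z' (mkArc B ξ hξ i₀) = 0 := by
        rw [hz'def]
        simp only [Pi.smul_apply, Pi.sub_apply, smul_eq_mul]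
        have hp1 : p (mkArc B ξ hξ i₀) = 1 := by rw [hp]; exact pathFlow_mkArc B hξ i₀
        rw [hp1, ← hi₀, ← ht]
        ring
      have hss : Finset.univ.filter (fun j => 0 < z' j) ⊂
          Finset.univ.filter (fun j => 0 < z j) := by
        rw [Finset.ssubset_iff_of_subset hsubset]
        refine ⟨mkArc B ξ hξ i₀, ?_, ?_⟩
        · simp only [Finset.mem_filter, Finset.mem_univ, true_and]
          exact hpos i₀
        · simp only [Finset.mem_filter, Finset.mem_univ, true_and, not_lt]
          rw [hz'i₀]
      have hcard' : (Finset.univ.filter fun j => 0 < z' j).card < m :=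
        hcard ▸ Finset.card_lt_card hss
      have hCTP' := IH _ hcard' z' hz'QS rfl
      have hdecomp : z = t • p + (1 - t) • z' := by
        rw [hz'def, smul_inv_smul₀ h1t.ne']
        abel
      rw [hdecomp, map_add, map_smul, map_smul, hp, projL_pathFlow B hξ]
      exact (convex_convexHull ℝ _) hincVec hCTP' ht_pos.le h1t.le (by ring)

lemma QS_convex : Convex ℝ (QS B) := by
  intro z1 h1 z2 h2 a b ha hb hab
  refine ⟨fun j => ?_, fun k => ?_⟩
  · simp only [Pi.add_apply, Pi.smul_apply, smul_eq_mul]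
    exact add_nonneg (mul_nonneg ha (h1.1 j)) (mul_nonneg hb (h2.1 j))
  · rw [outS_add, inS_add, outS_smul, inS_smul, outS_smul, inS_smul]
    have e1 := h1.2 k
    have e2 := h2.2 k
    calc a * outS B z1 k + b * outS B z2 k - (a * inS B z1 k + b * inS B z2 k)
        = a * (outS B z1 k - inS B z1 k) + b * (outS B z2 k - inS B z2 k) := by ring
      _ = a * evec B k + b * evec B k := by rw [e1, e2]
      _ = evec B k := by rw [← add_mul, hab, one_mul]

lemma image_QS_eq_CTP (hn : 2 ≤ n) (hB : ∀ i, (B i).Nonempty) :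
    projL B '' QS B = CTP B := by
  apply Set.Subset.antisymm
  · rintro x ⟨z, hz, rfl⟩
    exact mem_CTP_of_QS B hn hB z hz
  · have himg : Convex ℝ (projL B '' QS B) := (QS_convex B).linear_image (projL B)
    simp only [CTP]
    refine convexHull_min ?_ himg
    rintro x ⟨ξ, hξc, rfl⟩
    exact ⟨pathFlow B ξ, pathFlow_mem_QS B (by omega) hξc, projL_pathFlow B hξc.1⟩

/-- the constraint matrix, indexed by nodes and arcs -/
noncomputable def Cm : NodeT B → ArcT B → ℝ :=
  fun k j => (if arcOut B j = k then 1 else 0) - (if arcIn B j = k then 1 else 0)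

lemma Cm_sum (z : ArcT B → ℝ) (k : NodeT B) :
    ∑ j : ArcT B, Cm B k j * z j = outS B z k - inS B z k := by
  rw [outS, inS, ← Finset.sum_sub_distrib]
  refine Finset.sum_congr rfl fun j _ => ?_
  rw [Cm]
  by_cases h1 : arcOut B j = k <;> by_cases h2 : arcIn B j = k <;> simp [h1, h2]

end EF

/-- `CTP[B]` has an extended formulation of size at most
`2^rank(B) · size(B)`. -/
theorem statement15 (d n : ℕ) (hn : 2 ≤ n) (B : Fin n → Set (F2 d))
    (hB : ∀ i, (B i).Nonempty) :
    ∃ N : ℕ, N ≤ 2 ^ blockRank B * blockSize B ∧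
      ∃ (m : ℕ) (C : Matrix (Fin m) (Fin N) ℝ) (e : Fin m → ℝ)
        (π : (Fin N → ℝ) →ₗ[ℝ] (Fin n → F2 d → ℝ)),
        π '' { y : Fin N → ℝ | (∀ j, 0 ≤ y j) ∧ C.mulVec y = e } = CTP B := by
  have hW : Fintype.card ↥(Wsp B) = 2 ^ blockRank B := by
    rw [Module.card_eq_pow_finrank (K := ZMod 2), ZMod.card]
    rfl
  have hcard : Fintype.card (ArcT B) = 2 ^ blockRank B * blockSize B := by
    rw [Fintype.card_sigma]
    calc ∑ i, Fintype.card (↥(B i) × ↥(Wsp B))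
        = ∑ i, (B i).ncard * 2 ^ blockRank B := by
          refine Finset.sum_congr rfl fun i _ => ?_
          rw [Fintype.card_prod, hW, ← Nat.card_coe_set_eq, Nat.card_eq_fintype_card]
      _ = 2 ^ blockRank B * blockSize B := by
          rw [← Finset.sum_mul, mul_comm, blockSize]
  refine ⟨Fintype.card (ArcT B), le_of_eq hcard, Fintype.card (NodeT B), ?_⟩
  set eJ : ArcT B ≃ Fin (Fintype.card (ArcT B)) := Fintype.equivFin _ with heJ
  set eK : NodeT B ≃ Fin (Fintype.card (NodeT B)) := Fintype.equivFin _ with heK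
  refine ⟨Matrix.of (fun a b => Cm B (eK.symm a) (eJ.symm b)),
    fun a => evec B (eK.symm a), (projL B).comp (LinearMap.funLeft ℝ ℝ eJ), ?_⟩
  have hfl : ∀ y : Fin (Fintype.card (ArcT B)) → ℝ,
      LinearMap.funLeft ℝ ℝ (⇑eJ) y = y ∘ eJ := fun y => rfl
  have hmv : ∀ y : Fin (Fintype.card (ArcT B)) → ℝ, ∀ a,
      (Matrix.of (fun a b => Cm B (eK.symm a) (eJ.symm b))).mulVec y a
        = outS B (y ∘ eJ) (eK.symm a) - inS B (y ∘ eJ) (eK.symm a) := by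
    intro y a
    rw [← Cm_sum]
    simp only [Matrix.mulVec, dotProduct, Matrix.of_apply]
    refine (Fintype.sum_equiv eJ _ _ fun j => ?_).symm
    beta_reduce
    rw [Equiv.symm_apply_apply]
    rfl
  have key : ∀ y : Fin (Fintype.card (ArcT B)) → ℝ,
      ((∀ b, 0 ≤ y b) ∧
        (Matrix.of (fun a b => Cm B (eK.symm a) (eJ.symm b))).mulVec y
          = fun a => evec B (eK.symm a)) ↔ (y ∘ eJ) ∈ QS B := by
    intro y
    constructor
    · rintro ⟨hge, heq⟩
      refine ⟨fun j => hge (eJ j), fun k => ?_⟩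
      have h := congrFun heq (eK k)
      rw [hmv y (eK k)] at h
      simp only [Equiv.symm_apply_apply] at h
      exact h
    · rintro ⟨hge, heq⟩
      refine ⟨fun b => by simpa using hge (eJ.symm b), ?_⟩
      funext a
      rw [hmv y a]
      exact heq (eK.symm a)
  rw [← image_QS_eq_CTP B hn hB]
  ext x
  constructor
  · rintro ⟨y, hy, rfl⟩
    exact ⟨y ∘ eJ, (key y).mp hy, by rw [LinearMap.comp_apply, hfl]⟩
  · rintro ⟨z, hzQS, rfl⟩
    refine ⟨z ∘ eJ.symm, (key _).mpr ?_, ?_⟩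
    · have : (z ∘ eJ.symm) ∘ eJ = z := by
        funext j
        simp
      rw [this]
      exact hzQS
    · rw [LinearMap.comp_apply, hfl]
      congr 1
      funext j
      simp
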